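/- arXiv:2309.17381 — 2 statements merged into one kernel-verified Lean document; each statement's English description precedes it below -/
import Mathlib

section
/- Let F be a field with a valuation ν : F → ℚ ∪ {∞} and let π ∈ F satisfy ν(π) = 1. Let O_A, …, O_H ∈ F^4 be eight vectors, each with minimum coordinate valuation 0, and let S ⊆ Λ = {A,…,H} be such that for every i ∈ S one has ν((O_i)_j) ≥ 1 for j = 2, 3, 4, while for every i ∉ S there is some j ∈ {2, 3, 4} with ν((O_i)_j) = 0. Define O′_i = (π·(O_i)_1, (O_i)_2, (O_i)_3, (O_i)_4) for i ∉ S and O′_i = ((O_i)_1, π^{−1}(O_i)_2, π^{−1}(O_i)_3, π^{−1}(O_i)_4) for i ∈ S. Then each O′_i again has minimum coordinate valuation 0, and for every 4-element subset Q ⊆ Λ one has det(O′_Q) = π^{1 − |Q ∩ S|} · det(O_Q); in particular ν(det O′_Q) = ν(det O_Q) + 1 − |Q ∩ S| = ν(det O_Q) − v_pt^S(Q) + v_pln^{Λ∖S}(Q). -/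
open Finset

noncomputable section

/-- The index set of Plücker coordinates: the 4-element subsets of the 8 labels
`Λ = {A,…,H} = Fin 8`. -/
abbrev PIdx : Type := {Q : Finset (Fin 8) // Q.card = 4}

/-- The point-coincidence vector `v_pt^T`, with `v_pt^T(Q) = max (0, |Q ∩ T| - 1)`. -/
def vpt (T : Finset (Fin 8)) : PIdx → ℚ := fun Q => max (((Q.1 ∩ T).card : ℚ) - 1) 0

/-- The line-coincidence vector `v_ln^T`, with `v_ln^T(Q) = max (0, |Q ∩ T| - 2)`. -/
def vln (T : Finset (Fin 8)) : PIdx → ℚ := fun Q => max (((Q.1 ∩ T).card : ℚ) - 2) 0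

/-- The plane-coincidence vector `v_pln^T`, with `v_pln^T(Q) = max (0, |Q ∩ T| - 3)`. -/
def vpln (T : Finset (Fin 8)) : PIdx → ℚ := fun Q => max (((Q.1 ∩ T).card : ℚ) - 3) 0

/-- An octad: an 8-tuple of points of `P³` given by coordinate vectors in `F⁴`. -/
abbrev Octad (F : Type) : Type := Fin 8 → Fin 4 → F

variable {F : Type} [Field F]

/-- The chosen affine representatives are normalized: every coordinate has valuation `≥ 0`
and the minimum coordinate valuation of every point is `0`. -/
def Normalized (v : AddValuation F (WithTop ℚ)) (O : Octad F) : Prop :=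
  ∀ i, (∀ j, 0 ≤ v (O i j)) ∧ ∃ j, v (O i j) = 0

/-- The 4×4 matrix whose columns are the four points of the octad indexed by `Q`. -/
def subMat (O : Octad F) (Q : PIdx) : Matrix (Fin 4) (Fin 4) F :=
  Matrix.of fun r c => O (Q.1.orderEmbOfFin Q.2 c) r

/-- `O` has Plücker valuation vector `w`, i.e. for every 4-element subset `Q` of the labels
the valuation of the corresponding Plücker coordinate is `w Q`. -/
def HasPluck (v : AddValuation F (WithTop ℚ)) (O : Octad F) (w : PIdx → ℚ) : Prop :=
  ∀ Q : PIdx, v ((subMat O Q).det) = ((w Q : ℚ) : WithTop ℚ)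

/-- `O'` is obtained from `O` by a projective linear transformation of `P³`
(composed with a rescaling of the affine representative of each point). -/
def PGLMove (O O' : Octad F) : Prop :=
  ∃ M : Matrix (Fin 4) (Fin 4) F, IsUnit M.det ∧
    ∃ c : Fin 8 → F, (∀ i, c i ≠ 0) ∧ ∀ i, O' i = c i • M.mulVec (O i)

/-- PGL-equivalence of valuation data: every octad with Plücker valuation vector `w` is
carried by some element of `PGL₄` to an octad with Plücker valuation vector `w'`, and
vice versa. -/
def PGLequiv (v : AddValuation F (WithTop ℚ)) (w w' : PIdx → ℚ) : Prop :=
  (∀ O : Octad F, Normalized v O → HasPluck v O w →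
      ∃ O' : Octad F, Normalized v O' ∧ PGLMove O O' ∧ HasPluck v O' w') ∧
  (∀ O : Octad F, Normalized v O → HasPluck v O w' →
      ∃ O' : Octad F, Normalized v O' ∧ PGLMove O O' ∧ HasPluck v O' w)

/-- A matrix with integral entries (valuations `≥ 0`). -/
def IntegralMat (v : AddValuation F (WithTop ℚ)) (M : Matrix (Fin 4) (Fin 4) F) : Prop :=
  ∀ i j, 0 ≤ v (M i j)

/-- An element of `GL₄(O)`: an invertible matrix with entries in the valuation ring whose
inverse also has entries in the valuation ring. -/
def GLIntegral (v : AddValuation F (WithTop ℚ)) (M : Matrix (Fin 4) (Fin 4) F) : Prop :=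
  IntegralMat v M ∧ ∃ N, IntegralMat v N ∧ M * N = 1 ∧ N * M = 1

/-- The five standard points `(1:0:0:0), (0:1:0:0), (0:0:1:0), (0:0:0:1), (1:1:1:1)`. -/
def stdFive : Fin 5 → Fin 4 → F :=
  ![![1, 0, 0, 0], ![0, 1, 0, 0], ![0, 0, 1, 0], ![0, 0, 0, 1], ![1, 1, 1, 1]]

/-- Five of the points of the octad are the five standard points of `P³`. -/
def FiveStandard (O : Octad F) : Prop :=
  ∃ ι : Fin 5 → Fin 8, Function.Injective ι ∧
    ∃ lam : Fin 5 → F, (∀ k, lam k ≠ 0) ∧ ∀ k, O (ι k) = lam k • stdFive k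

/-- Every octad with Plücker valuation vector `w` is carried by an element of `GL₄(O)` to an
octad five of whose points are the standard points. -/
def GLOStd (v : AddValuation F (WithTop ℚ)) (w : PIdx → ℚ) : Prop :=
  ∀ O : Octad F, Normalized v O → HasPluck v O w →
    ∃ M : Matrix (Fin 4) (Fin 4) F, GLIntegral v M ∧
      ∃ O' : Octad F, Normalized v O' ∧
        (∃ c : Fin 8 → F, (∀ i, c i ≠ 0) ∧ ∀ i, O' i = c i • M.mulVec (O i)) ∧
        FiveStandard O'

lemma valInvAux {F : Type} [Field F] (v : AddValuation F (WithTop ℚ)) (π : F)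
    (hπ : v π = ((1:ℚ) : WithTop ℚ)) : v π⁻¹ = ((-1:ℚ) : WithTop ℚ) := by
  have hπ0 : π ≠ 0 := by
    intro h; rw [h, AddValuation.map_zero] at hπ; exact (WithTop.coe_ne_top (a := (1:ℚ))) hπ.symm
  have h1 : v (π * π⁻¹) = 0 := by rw [mul_inv_cancel₀ hπ0, AddValuation.map_one]
  rw [AddValuation.map_mul, hπ] at h1
  cases' hq : (v π⁻¹) with q
  · rw [hq] at h1; simp at h1
  · rw [hq, ← WithTop.coe_add] at h1
    have h2 : (1 : ℚ) + q = 0 := by exact_mod_cast h1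
    rw [show q = -1 by linarith]

lemma valZpowAux {F : Type} [Field F] (v : AddValuation F (WithTop ℚ)) (π : F)
    (hπ : v π = ((1:ℚ) : WithTop ℚ)) (m : ℤ) : v (π ^ m) = ((m : ℚ) : WithTop ℚ) := by
  have hπ0 : π ≠ 0 := by
    intro h; rw [h, AddValuation.map_zero] at hπ; exact (WithTop.coe_ne_top (a := (1:ℚ))) hπ.symm
  induction m using Int.induction_on with
  | zero => simp
  | succ n ih =>
      rw [zpow_add₀ hπ0, AddValuation.map_mul, ih, zpow_one, hπ, ← WithTop.coe_add]
      push_cast; ring_nf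
  | pred n ih =>
      rw [show (-(n:ℤ)-1) = (-(n:ℤ)) + (-1) from by ring, zpow_add₀ hπ0, AddValuation.map_mul, ih,
        zpow_neg_one, valInvAux v π hπ, ← WithTop.coe_add]
      push_cast; ring_nf

lemma cardLemAux (Q : Finset (Fin 8)) (h : Q.card = 4) (S : Finset (Fin 8)) :
    (Finset.univ.filter fun c : Fin 4 => Q.orderEmbOfFin h c ∈ S).card = (Q ∩ S).card := by
  rw [← Finset.filter_mem_eq_inter]
  apply Finset.card_bij (fun c _ => Q.orderEmbOfFin h c)
  · intro c hc
    simp only [Finset.mem_filter] at hc ⊢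
    exact ⟨Finset.orderEmbOfFin_mem Q h c, hc.2⟩
  · intro a _ b _ hab
    exact (Q.orderEmbOfFin h).injective hab
  · intro b hb
    simp only [Finset.mem_filter] at hb
    have : b ∈ Set.range (Q.orderEmbOfFin h) := by
      rw [Finset.range_orderEmbOfFin]; exact hb.1
    obtain ⟨c, hc⟩ := this
    exact ⟨c, by simp [hc, hb.2], hc⟩

/-- Rescaling the first coordinate by a uniformizer and renormalizing:
explicit effect on all Plücker coordinates and their valuations. -/
theorem rescaling_effect_on_plucker
    (F : Type) [Field F] (v : AddValuation F (WithTop ℚ))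
    (π : F) (hπ : v π = ((1 : ℚ) : WithTop ℚ))
    (O : Octad F) (hN : Normalized v O)
    (S : Finset (Fin 8))
    (hS : ∀ i ∈ S, ∀ j : Fin 4, j ≠ 0 → ((1 : ℚ) : WithTop ℚ) ≤ v (O i j))
    (hS' : ∀ i ∉ S, ∃ j : Fin 4, j ≠ 0 ∧ v (O i j) = 0)
    (O' : Octad F)
    (hO' : O' = fun i j =>
      if i ∈ S then (if j = 0 then O i j else π⁻¹ * O i j)
      else (if j = 0 then π * O i j else O i j)) :
    Normalized v O' ∧
    (∀ Q : PIdx,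
      (subMat O' Q).det = π ^ ((1 : ℤ) - ((Q.1 ∩ S).card : ℤ)) * (subMat O Q).det) ∧
    (∀ Q : PIdx,
      v ((subMat O' Q).det) =
        v ((subMat O Q).det) + ((1 - ((Q.1 ∩ S).card : ℚ) : ℚ) : WithTop ℚ)) ∧
    (∀ Q : PIdx,
      v ((subMat O' Q).det) + ((vpt S Q : ℚ) : WithTop ℚ) =
        v ((subMat O Q).det) + ((vpln Sᶜ Q : ℚ) : WithTop ℚ)) := by

  have hπ0 : π ≠ 0 := by
    intro h; rw [h, AddValuation.map_zero] at hπ; exact (WithTop.coe_ne_top (a := (1:ℚ))) hπ.symm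
  have hinv := valInvAux v π hπ
  -- determinant identity
  have hdet : ∀ Q : PIdx,
      (subMat O' Q).det = π ^ ((1 : ℤ) - ((Q.1 ∩ S).card : ℤ)) * (subMat O Q).det := by
    intro Q
    have key : subMat O' Q =
        Matrix.diagonal (fun r : Fin 4 => if r = 0 then π else 1) * subMat O Q *
          Matrix.diagonal (fun c : Fin 4 => if Q.1.orderEmbOfFin Q.2 c ∈ S then π⁻¹ else 1) := by
      ext r c
      rw [Matrix.mul_diagonal, Matrix.diagonal_mul]
      simp only [subMat, hO', Matrix.of_apply]
      by_cases h1 : Q.1.orderEmbOfFin Q.2 c ∈ S <;> by_cases h2 : r = 0 <;>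
        simp [h1, h2] <;> field_simp
    rw [key, Matrix.det_mul, Matrix.det_mul, Matrix.det_diagonal, Matrix.det_diagonal]
    have e1 : (∏ r : Fin 4, (if r = 0 then π else 1)) = π := by
      rw [Fin.prod_univ_four]
      norm_num [show (1:Fin 4) ≠ 0 by decide, show (2:Fin 4) ≠ 0 by decide,
        show (3:Fin 4) ≠ 0 by decide]
    have e2 : (∏ c : Fin 4, (if Q.1.orderEmbOfFin Q.2 c ∈ S then π⁻¹ else 1))
        = π⁻¹ ^ ((Q.1 ∩ S).card) := by
      rw [Finset.prod_ite, Finset.prod_const, Finset.prod_const, one_pow, mul_one,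
        cardLemAux Q.1 Q.2 S]
    rw [e1, e2, zpow_sub₀ hπ0, zpow_one, zpow_natCast, div_eq_mul_inv, inv_pow]
    ring
  -- valuation identity
  have hval : ∀ Q : PIdx,
      v ((subMat O' Q).det) =
        v ((subMat O Q).det) + ((1 - ((Q.1 ∩ S).card : ℚ) : ℚ) : WithTop ℚ) := by
    intro Q
    rw [hdet Q, AddValuation.map_mul, valZpowAux v π hπ, add_comm]
    congr 1
    push_cast
    ring
  refine ⟨?_, hdet, hval, ?_⟩
  · -- Normalized
    intro i
    by_cases hi : i ∈ S
    · constructor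
      · intro j
        by_cases hj : j = 0
        · simp only [hO', hi, hj, if_true]
          exact (hN i).1 0
        · simp only [hO', hi, if_true, hj, if_false, AddValuation.map_mul, hinv]
          have := hS i hi j hj
          calc (0 : WithTop ℚ) = ((-1 : ℚ) : WithTop ℚ) + ((1:ℚ) : WithTop ℚ) := by
                rw [← WithTop.coe_add]; norm_num
            _ ≤ ((-1 : ℚ) : WithTop ℚ) + v (O i j) := add_le_add_right this _
      · obtain ⟨j, hj⟩ := (hN i).2
        have hj0 : j = 0 := by
          by_contra h
          have := hS i hi j h
          rw [hj] at this
          exact absurd this (by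
            intro hle
            have : ((1:ℚ) : WithTop ℚ) ≤ ((0:ℚ) : WithTop ℚ) := by simpa using hle
            exact absurd (WithTop.coe_le_coe.mp this) (by norm_num))
        refine ⟨0, ?_⟩
        simp only [hO', hi, if_true]
        rw [← hj0] at *
        simpa [hj0] using hj
    · constructor
      · intro j
        by_cases hj : j = 0
        · simp only [hO', hi, if_false, hj, if_true, AddValuation.map_mul, hπ]
          have h0 := ((hN i).1 0)
          calc (0 : WithTop ℚ) ≤ v (O i 0) := h0
            _ ≤ ((1:ℚ) : WithTop ℚ) + v (O i 0) := le_add_of_nonneg_left (by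
                rw [show (0 : WithTop ℚ) = ((0:ℚ) : WithTop ℚ) from rfl]
                exact WithTop.coe_le_coe.mpr (by norm_num))
        · simp only [hO', hi, if_false, hj]
          exact (hN i).1 j
      · obtain ⟨j, hj0, hj⟩ := hS' i hi
        exact ⟨j, by simp only [hO', hi, if_false, hj0, if_false]; exact hj⟩
  · -- final valuation identity
    intro Q
    rw [hval Q]
    set k := (Q.1 ∩ S).card with hk
    have hk4 : k ≤ 4 := by
      have h1 : k ≤ Q.1.card := Finset.card_le_card Finset.inter_subset_left
      rw [Q.2] at h1; exact h1
    have hcompl : (Q.1 ∩ Sᶜ).card = 4 - k := by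
      rw [← Finset.sdiff_eq_inter_compl]
      have := Finset.card_sdiff_add_card_inter Q.1 S
      omega
    have hvpt : vpt S Q = max ((k : ℚ) - 1) 0 := rfl
    have hvpln : vpln Sᶜ Q = max ((1 : ℚ) - k) 0 := by
      unfold vpln
      rw [hcompl]
      congr 1
      have : ((4 - k : ℕ) : ℚ) = 4 - (k : ℚ) := by
        push_cast [Nat.cast_sub hk4]; ring
      rw [this]; ring
    rw [hvpt, hvpln]
    cases' hq : v ((subMat O Q).det) with q
    · simp
    · have hr : q + (1 - (k:ℚ)) + max ((k:ℚ) - 1) 0 = q + max (1 - (k:ℚ)) 0 := by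
        rcases le_total ((k : ℚ)) 1 with h | h
        · rw [max_eq_right (by linarith), max_eq_left (by linarith)]; ring
        · rw [max_eq_left (by linarith), max_eq_right (by linarith)]; ring
      exact_mod_cast hr

end
end

section
/- (i) The vectors v_pt^{AB} and v_pln^{CDEFGH} are PGL-equivalent valuation data. (ii) The vectors v_pln^{ABCD} + v_pln^{EFGH}, v_pln^{ABCD} + v_pt^{ABCD}, and v_pln^{EFGH} + v_pt^{EFGH} are pairwise PGL-equivalent valuation data. Moreover, every octad whose Plücker valuation vector is one of these vectors is carried by an element of GL_4(O_K̄) to an octad five of whose points are the standard points (1:0:0:0), (0:1:0:0), (0:0:1:0), (0:0:0:1), (1:1:1:1). -/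
open Finset

noncomputable section

variable {F : Type} [Field F]

namespace OctadAux

open Finset

variable {F : Type} [Field F] (v : AddValuation F (WithTop ℚ))

lemma v_prod {ι : Type} (s : Finset ι) (f : ι → F) :
    v (∏ i ∈ s, f i) = ∑ i ∈ s, v (f i) := by
  induction s using Finset.cons_induction with
  | empty => simp
  | cons i s hi ih => rw [Finset.prod_cons, Finset.sum_cons, v.map_mul, ih]

lemma v_sum_ge {ι : Type} (s : Finset ι) (f : ι → F) (b : WithTop ℚ)
    (h : ∀ i ∈ s, b ≤ v (f i)) : b ≤ v (∑ i ∈ s, f i) := by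
  induction s using Finset.cons_induction with
  | empty => simp
  | cons i s hi ih =>
    rw [Finset.sum_cons]
    exact le_trans (le_min (h i (Finset.mem_cons_self _ _))
      (ih fun j hj => h j (Finset.mem_cons_of_mem hj))) (v.map_add _ _)

lemma v_det_nonneg {n : Type} [Fintype n] [DecidableEq n] (A : Matrix n n F)
    (h : ∀ i j, 0 ≤ v (A i j)) : 0 ≤ v A.det := by
  rw [Matrix.det_apply]
  refine v_sum_ge v _ _ _ (fun σ _ => ?_)
  rcases Int.units_eq_one_or (Equiv.Perm.sign σ) with hs | hs <;> rw [hs] <;>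
    simp only [one_smul, Units.neg_smul, v.map_neg] <;>
  · rw [v_prod]
    exact Finset.sum_nonneg fun i _ => h _ _

lemma v_ne_zero {x : F} {q : ℚ} (h : v x = (q : WithTop ℚ)) : x ≠ 0 := by
  intro h0
  rw [h0, v.map_zero] at h
  exact (WithTop.coe_ne_top h.symm)

lemma v_inv {x : F} {q : ℚ} (h : v x = (q : WithTop ℚ)) : v x⁻¹ = ((-q : ℚ) : WithTop ℚ) := by
  have hx : x ≠ 0 := v_ne_zero v h
  have := v.map_mul x⁻¹ x
  rw [inv_mul_cancel₀ hx, v.map_one, h] at this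
  have h2 : v x⁻¹ + (q : WithTop ℚ) = 0 := this.symm
  have hne : v x⁻¹ ≠ ⊤ := by
    intro ht; rw [ht, top_add] at h2; exact (by simp : (⊤ : WithTop ℚ) ≠ 0) h2
  obtain ⟨r, hvi⟩ := WithTop.ne_top_iff_exists.mp hne
  rw [← hvi] at h2 ⊢
  norm_cast at h2 ⊢
  linarith

/-- The matrix whose columns are the points of `O` indexed by `g`. -/
def colMat (O : Octad F) (g : Fin 4 → Fin 8) : Matrix (Fin 4) (Fin 4) F :=
  Matrix.of fun r c => O (g c) r

lemma colMat_det_zero (O : Octad F) {g : Fin 4 → Fin 8} (hg : ¬ Function.Injective g) :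
    (colMat O g).det = 0 := by
  rw [Function.not_injective_iff] at hg
  obtain ⟨c, c', hcc, hne⟩ := hg
  rw [← Matrix.det_transpose]
  refine Matrix.det_zero_of_row_eq hne ?_
  funext r
  simp [colMat, Matrix.transpose_apply, hcc]

lemma v_colMat_det (O : Octad F) {g : Fin 4 → Fin 8} (hg : Function.Injective g)
    (Q : PIdx) (hQ : Q.1 = Finset.image g Finset.univ) :
    v (colMat O g).det = v (subMat O Q).det := by
  set e : Fin 4 → Fin 8 := fun k => Q.1.orderEmbOfFin Q.2 k with he_def
  have he : Function.Injective e := fun a b hab => (Q.1.orderEmbOfFin Q.2).injective hab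
  have hmemg : ∀ c, g c ∈ Q.1 := by
    intro c; rw [hQ]; exact Finset.mem_image_of_mem _ (Finset.mem_univ c)
  have hmeme : ∀ c, e c ∈ Q.1 := fun c => Q.1.orderEmbOfFin_mem Q.2 c
  have hcard : Fintype.card {x // x ∈ Q.1} = Fintype.card (Fin 4) := by
    rw [Fintype.card_coe, Q.2, Fintype.card_fin]
  let g' : Fin 4 → {x // x ∈ Q.1} := fun c => ⟨g c, hmemg c⟩
  let e' : Fin 4 → {x // x ∈ Q.1} := fun c => ⟨e c, hmeme c⟩
  have hg' : Function.Bijective g' := by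
    rw [Fintype.bijective_iff_injective_and_card]
    exact ⟨fun a b hab => hg (congrArg Subtype.val hab), hcard.symm⟩
  have he' : Function.Bijective e' := by
    rw [Fintype.bijective_iff_injective_and_card]
    exact ⟨fun a b hab => he (congrArg Subtype.val hab), hcard.symm⟩
  let G := Equiv.ofBijective g' hg'
  let E := Equiv.ofBijective e' he'
  let p : Equiv.Perm (Fin 4) := G.trans E.symm
  have hge : ∀ c, g c = e (p c) := by
    intro c
    have h1 : e' (E.symm (G c)) = G c := E.apply_symm_apply (G c)
    have h2 : (G c : {x // x ∈ Q.1}) = g' c := rfl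
    have := congrArg Subtype.val (h1.trans h2)
    exact this.symm
  have hmat : colMat O g = (subMat O Q).submatrix id p := by
    ext r c
    simp only [colMat, Matrix.of_apply, Matrix.submatrix_apply, id_eq, subMat, hge c]
    rfl
  rw [hmat, Matrix.det_permute']
  rcases Int.units_eq_one_or (Equiv.Perm.sign p) with hs | hs <;> rw [hs] <;>
    simp [v.map_neg]

lemma updateColumn_colMat (O : Octad F) (g : Fin 4 → Fin 8) (j : Fin 4) (i : Fin 8) :
    (colMat O g).updateCol j (fun r => O i r) = colMat O (Function.update g j i) := by
  ext r c
  rw [Matrix.updateCol_apply]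
  simp only [colMat, Matrix.of_apply, Function.update_apply]
  by_cases h : c = j <;> simp [h]

lemma image_update_card {g : Fin 4 → Fin 8} (j : Fin 4) (i : Fin 8)
    (h : Function.Injective (Function.update g j i)) :
    (Finset.image (Function.update g j i) Finset.univ).card = 4 := by
  rw [Finset.card_image_of_injective _ h, Finset.card_univ, Fintype.card_fin]

lemma sum_emb (Q : PIdx) (f : Fin 8 → ℚ) :
    ∑ i ∈ Q.1, f i = ∑ k : Fin 4, f (Q.1.orderEmbOfFin Q.2 k) := by
  have himg : Finset.image (fun k => Q.1.orderEmbOfFin Q.2 k) Finset.univ = Q.1 := by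
    apply Finset.eq_of_subset_of_card_le
    · intro x hx
      obtain ⟨k, _, rfl⟩ := Finset.mem_image.mp hx
      exact Q.1.orderEmbOfFin_mem Q.2 k
    · rw [Finset.card_image_of_injective _ (Q.1.orderEmbOfFin Q.2).injective,
        Finset.card_univ, Fintype.card_fin, Q.2]
  conv_lhs => rw [← himg]
  rw [Finset.sum_image (fun a _ b _ hab => (Q.1.orderEmbOfFin Q.2).injective hab)]

lemma subMat_move (O : Octad F) (M : Matrix (Fin 4) (Fin 4) F) (c : Fin 8 → F) (Q : PIdx) :
    subMat (fun i => c i • M.mulVec (O i)) Q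
      = (M * subMat O Q) * Matrix.diagonal (fun k => c (Q.1.orderEmbOfFin Q.2 k)) := by
  ext r k
  rw [Matrix.mul_diagonal, Matrix.mul_apply]
  simp only [subMat, Matrix.of_apply, Pi.smul_apply, smul_eq_mul, Matrix.mulVec, dotProduct]
  rw [mul_comm]


theorem masterMove (v : AddValuation F (WithTop ℚ))
    (hsurj : ∀ q : ℚ, ∃ x : F, v x = (q : WithTop ℚ))
    (w w' : PIdx → ℚ) (σ : Fin 4 → Fin 8) (a : Fin 4 → ℚ) (μ : Fin 8 → ℚ)
    (hσ : Function.Injective σ)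
    (hbase : ∀ Q : PIdx, Q.1 = Finset.image σ Finset.univ → w Q = 0)
    (hmin : ∀ Q : PIdx, ∀ i j, Q.1 = Finset.image (Function.update σ j i) Finset.univ →
        μ i ≤ a j + w Q)
    (hmin' : ∀ i : Fin 8, ∃ j, Function.Injective (Function.update σ j i) ∧
        ∀ Q : PIdx, Q.1 = Finset.image (Function.update σ j i) Finset.univ → μ i = a j + w Q)
    (hshift : ∀ Q : PIdx, w' Q = w Q + (∑ j, a j) - ∑ i ∈ Q.1, μ i) :
    ∀ O : Octad F, Normalized v O → HasPluck v O w →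
      ∃ O' : Octad F, Normalized v O' ∧ PGLMove O O' ∧ HasPluck v O' w' := by
  classical
  intro O hN hP
  set U : Matrix (Fin 4) (Fin 4) F := colMat O σ with hU
  have hQσcard : (Finset.image σ Finset.univ).card = 4 := by
    rw [Finset.card_image_of_injective _ hσ, Finset.card_univ, Fintype.card_fin]
  have hvU : v U.det = ((0 : ℚ) : WithTop ℚ) := by
    rw [v_colMat_det v O hσ ⟨Finset.image σ Finset.univ, hQσcard⟩ rfl, hP _,
      hbase ⟨Finset.image σ Finset.univ, hQσcard⟩ rfl]
  have hUne : U.det ≠ 0 := v_ne_zero v hvU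
  choose d hd using fun j => hsurj (a j)
  choose c hc using fun i => hsurj (-μ i)
  have hdne : ∀ j, d j ≠ 0 := fun j => v_ne_zero v (hd j)
  have hcne : ∀ i, c i ≠ 0 := fun i => v_ne_zero v (hc i)
  set M : Matrix (Fin 4) (Fin 4) F := Matrix.diagonal d * U.adjugate with hM
  have hMdet : M.det = (∏ j, d j) * U.det ^ 3 := by
    rw [hM, Matrix.det_mul, Matrix.det_diagonal, Matrix.det_adjugate]
    norm_num
  have hvdetM : v M.det = ((∑ j, a j : ℚ) : WithTop ℚ) := by
    rw [hMdet, v.map_mul, v.map_pow, hvU, v_prod]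
    simp [hd]
  have hMdetne : M.det ≠ 0 := by
    rw [hMdet]
    exact mul_ne_zero (Finset.prod_ne_zero_iff.mpr fun j _ => hdne j) (pow_ne_zero _ hUne)
  have hcoord : ∀ i j, (M.mulVec (O i)) j
      = d j * (colMat O (Function.update σ j i)).det := by
    intro i j
    rw [hM, ← Matrix.mulVec_mulVec, ← Matrix.cramer_eq_adjugate_mulVec,
      Matrix.mulVec_diagonal, Matrix.cramer_apply, ← updateColumn_colMat]
  have hvcoord : ∀ (i : Fin 8) (j : Fin 4), Function.Injective (Function.update σ j i) →
      ∀ Q : PIdx, Q.1 = Finset.image (Function.update σ j i) Finset.univ →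
      v ((M.mulVec (O i)) j) = ((a j + w Q : ℚ) : WithTop ℚ) := by
    intro i j hinj Q hQ
    rw [hcoord, v.map_mul, hd j, v_colMat_det v O hinj Q hQ, hP Q]
    norm_cast
  refine ⟨fun i => c i • M.mulVec (O i), ?_, ?_, ?_⟩
  · -- Normalized
    intro i
    constructor
    · intro j
      show 0 ≤ v (c i * M.mulVec (O i) j)
      rw [v.map_mul, hc i]
      by_cases hinj : Function.Injective (Function.update σ j i)
      · rw [hvcoord i j hinj ⟨_, image_update_card j i hinj⟩ rfl]
        have h1 := hmin ⟨_, image_update_card j i hinj⟩ i j rfl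
        norm_cast
        linarith
      · rw [hcoord, colMat_det_zero O hinj, mul_zero, v.map_zero, add_top]
        exact le_top
    · obtain ⟨j, hinj, hex⟩ := hmin' i
      refine ⟨j, ?_⟩
      show v (c i * M.mulVec (O i) j) = 0
      rw [v.map_mul, hc i,
        hvcoord i j hinj ⟨_, image_update_card j i hinj⟩ rfl]
      rw [hex ⟨_, image_update_card j i hinj⟩ rfl]
      norm_cast
      ring
  · exact ⟨M, isUnit_iff_ne_zero.mpr hMdetne, c, hcne, fun i => rfl⟩
  · -- HasPluck
    intro Q
    rw [subMat_move, Matrix.det_mul, Matrix.det_mul, Matrix.det_diagonal,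
      v.map_mul, v.map_mul, hvdetM, hP Q, v_prod]
    have hsum : ∑ k : Fin 4, v (c (Q.1.orderEmbOfFin Q.2 k))
        = ((-∑ i ∈ Q.1, μ i : ℚ) : WithTop ℚ) := by
      rw [sum_emb Q μ,
        Finset.sum_congr rfl (fun k (_ : k ∈ Finset.univ) => hc (Q.1.orderEmbOfFin Q.2 k)),
        ← WithTop.coe_sum]
      norm_cast
      exact Finset.sum_neg_distrib _
    rw [hsum, hshift Q]
    norm_cast
    ring


lemma mulVec_integral (M : Matrix (Fin 4) (Fin 4) F) (hM : IntegralMat v M)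
    (x : Fin 4 → F) (hx : ∀ j, 0 ≤ v (x j)) : ∀ j, 0 ≤ v (M.mulVec x j) := by
  intro j
  show 0 ≤ v (∑ m, M j m * x m)
  refine v_sum_ge v _ _ _ fun m _ => ?_
  rw [v.map_mul]
  exact add_nonneg (hM j m) (hx m)

lemma GLInt_point (M N : Matrix (Fin 4) (Fin 4) F) (hM : IntegralMat v M)
    (hN : IntegralMat v N) (hNM : N * M = 1) (x : Fin 4 → F)
    (hx1 : ∀ j, 0 ≤ v (x j)) (hx2 : ∃ j, v (x j) = 0) :
    (∀ j, 0 ≤ v (M.mulVec x j)) ∧ ∃ j, v (M.mulVec x j) = 0 := by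
  refine ⟨mulVec_integral v M hM x hx1, ?_⟩
  by_contra hcon
  push_neg at hcon
  have hpos : ∀ j, 0 < v (M.mulVec x j) :=
    fun j => lt_of_le_of_ne (mulVec_integral v M hM x hx1 j) (Ne.symm (hcon j))
  obtain ⟨j0, hj0⟩ := hx2
  have hx : x = N.mulVec (M.mulVec x) := by
    rw [Matrix.mulVec_mulVec, hNM, Matrix.one_mulVec]
  set b : WithTop ℚ := Finset.univ.inf' ⟨0, Finset.mem_univ 0⟩ (fun m => v (M.mulVec x m))
    with hb
  have hbpos : 0 < b := (Finset.lt_inf'_iff _).mpr fun m _ => hpos m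
  have hble : b ≤ v (x j0) := by
    conv_rhs => rw [hx]
    show b ≤ v (∑ m, N j0 m * M.mulVec x m)
    refine v_sum_ge v _ _ _ fun m _ => ?_
    rw [v.map_mul]
    calc b ≤ v (M.mulVec x m) := Finset.inf'_le _ (Finset.mem_univ m)
      _ = 0 + v (M.mulVec x m) := (zero_add _).symm
      _ ≤ v (N j0 m) + v (M.mulVec x m) := add_le_add_left (hN j0 m) _
  rw [hj0] at hble
  exact absurd (lt_of_lt_of_le hbpos hble) (lt_irrefl _)

lemma update_inj {n5 : Fin 5 → Fin 8} (hn : Function.Injective n5) (j : Fin 4) :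
    Function.Injective
      (Function.update (fun p : Fin 4 => n5 p.castSucc) j (n5 (Fin.last 4))) := by
  intro p q hpq
  simp only [Function.update_apply] at hpq
  split_ifs at hpq with h1 h2 h2
  · rw [h1, h2]
  · exact absurd (hn hpq).symm (Fin.ne_of_lt (Fin.castSucc_lt_last q))
  · exact absurd (hn hpq) (Fin.ne_of_lt (Fin.castSucc_lt_last p))
  · exact Fin.castSucc_injective _ (hn hpq)

theorem masterStd (v : AddValuation F (WithTop ℚ)) (w : PIdx → ℚ)
    (n : Fin 5 → Fin 8) (hn : Function.Injective n)
    (hz : ∀ Q : PIdx, Q.1 ⊆ Finset.image n Finset.univ → w Q = 0) :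
    GLOStd v w := by
  classical
  intro O hN hP
  set σ : Fin 4 → Fin 8 := fun p => n p.castSucc with hσdef
  have hσ : Function.Injective σ := fun p q h => Fin.castSucc_injective _ (hn h)
  set U : Matrix (Fin 4) (Fin 4) F := colMat O σ with hUdef
  have hQσcard : (Finset.image σ Finset.univ).card = 4 := by
    rw [Finset.card_image_of_injective _ hσ, Finset.card_univ, Fintype.card_fin]
  have hσsub : Finset.image σ Finset.univ ⊆ Finset.image n Finset.univ := by
    intro x hx
    obtain ⟨p, _, rfl⟩ := Finset.mem_image.mp hx
    exact Finset.mem_image.mpr ⟨p.castSucc, Finset.mem_univ _, rfl⟩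
  have hvU : v U.det = ((0 : ℚ) : WithTop ℚ) := by
    rw [v_colMat_det v O hσ ⟨Finset.image σ Finset.univ, hQσcard⟩ rfl, hP _,
      hz ⟨Finset.image σ Finset.univ, hQσcard⟩ hσsub]
  have hUdetne : U.det ≠ 0 := v_ne_zero v hvU
  set z : Fin 4 → F := Matrix.cramer U (O (n (Fin.last 4))) with hzdef
  have hupd : ∀ j : Fin 4, Function.Injective (Function.update σ j (n (Fin.last 4))) :=
    fun j => update_inj hn j
  have hupdsub : ∀ j : Fin 4, Finset.image (Function.update σ j (n (Fin.last 4))) Finset.univ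
      ⊆ Finset.image n Finset.univ := by
    intro j x hx
    obtain ⟨p, _, rfl⟩ := Finset.mem_image.mp hx
    rw [Function.update_apply]
    split_ifs
    · exact Finset.mem_image.mpr ⟨Fin.last 4, Finset.mem_univ _, rfl⟩
    · exact Finset.mem_image.mpr ⟨p.castSucc, Finset.mem_univ _, rfl⟩
  have hvz : ∀ j, v (z j) = ((0 : ℚ) : WithTop ℚ) := by
    intro j
    have hzj : z j = (colMat O (Function.update σ j (n (Fin.last 4)))).det := by
      rw [hzdef, Matrix.cramer_apply, ← updateColumn_colMat]
    rw [hzj, v_colMat_det v O (hupd j) ⟨_, image_update_card j _ (hupd j)⟩ rfl, hP _,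
      hz ⟨_, image_update_card j _ (hupd j)⟩ (hupdsub j)]
  have hzne : ∀ j, z j ≠ 0 := fun j => v_ne_zero v (hvz j)
  set D : Matrix (Fin 4) (Fin 4) F := Matrix.diagonal (fun j => (z j)⁻¹) with hDdef
  set M : Matrix (Fin 4) (Fin 4) F := D * U.adjugate with hMdef
  set N : Matrix (Fin 4) (Fin 4) F := (U.det)⁻¹ • (U * Matrix.diagonal z) with hNdef
  have hUint : ∀ i j, 0 ≤ v (U i j) := fun i j => (hN (σ j)).1 i
  have hMint : IntegralMat v M := by
    intro r cc
    have hrc : M r cc = (z r)⁻¹ * U.adjugate r cc := by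
      rw [hMdef, hDdef, Matrix.diagonal_mul]
    rw [hrc, v.map_mul, v_inv v (hvz r)]
    have hadj : 0 ≤ v (U.adjugate r cc) := by
      rw [Matrix.adjugate_apply]
      refine v_det_nonneg v _ ?_
      intro i j
      rw [Matrix.updateRow_apply]
      split_ifs
      · rw [Pi.single_apply]
        split_ifs
        · rw [v.map_one]
        · rw [v.map_zero]; exact le_top
      · exact hUint i j
    calc (0 : WithTop ℚ) = ((-0 : ℚ) : WithTop ℚ) + 0 := by norm_num
      _ ≤ _ := add_le_add_right hadj _
  have hNint : IntegralMat v N := by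
    intro r cc
    have hrc : N r cc = (U.det)⁻¹ * (U r cc * z cc) := by
      rw [hNdef, Matrix.smul_apply, Matrix.mul_diagonal, smul_eq_mul]
    rw [hrc, v.map_mul, v.map_mul, v_inv v hvU, hvz cc]
    have := hUint r cc
    calc (0 : WithTop ℚ) = ((-0 : ℚ) : WithTop ℚ) + (0 + ((0:ℚ) : WithTop ℚ)) := by norm_num
      _ ≤ _ := add_le_add_right (add_le_add_left (hUint r cc) _) _
  have hdiagz : D * Matrix.diagonal z = 1 := by
    rw [hDdef, Matrix.diagonal_mul_diagonal]
    have : (fun j => (z j)⁻¹ * z j) = fun _ => (1 : F) := by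
      funext j; exact inv_mul_cancel₀ (hzne j)
    rw [this, Matrix.diagonal_one]
  have hdiagz' : Matrix.diagonal z * D = 1 := by
    rw [hDdef, Matrix.diagonal_mul_diagonal]
    have : (fun j => z j * (z j)⁻¹) = fun _ => (1 : F) := by
      funext j; exact mul_inv_cancel₀ (hzne j)
    rw [this, Matrix.diagonal_one]
  have hMN : M * N = 1 := by
    calc M * N = (U.det)⁻¹ • ((D * U.adjugate * U) * Matrix.diagonal z) := by
          rw [hNdef, Matrix.mul_smul, hMdef]
          simp only [Matrix.mul_assoc]
      _ = (U.det)⁻¹ • (U.det • (D * Matrix.diagonal z)) := by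
          rw [Matrix.mul_assoc D, Matrix.adjugate_mul, Matrix.mul_smul, Matrix.mul_one,
            Matrix.smul_mul]
      _ = D * Matrix.diagonal z := by rw [smul_smul, inv_mul_cancel₀ hUdetne, one_smul]
      _ = 1 := hdiagz
  have hNM : N * M = 1 := by
    calc N * M = (U.det)⁻¹ • (U * (Matrix.diagonal z * D) * U.adjugate) := by
          rw [hNdef, Matrix.smul_mul, Matrix.mul_assoc, Matrix.mul_assoc, Matrix.mul_assoc]
      _ = (U.det)⁻¹ • (U.det • (1 : Matrix (Fin 4) (Fin 4) F)) := by
          rw [hdiagz', Matrix.mul_one, Matrix.mul_adjugate]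
      _ = 1 := by rw [smul_smul, inv_mul_cancel₀ hUdetne, one_smul]
  refine ⟨M, ⟨hMint, N, hNint, hMN, hNM⟩, fun i => M.mulVec (O i), ?_, ⟨fun _ => 1, fun _ => one_ne_zero, fun i => (one_smul _ _).symm⟩, ?_⟩
  · intro i
    exact GLInt_point v M N hMint hNint hNM (O i) (hN i).1 (hN i).2
  · -- FiveStandard
    refine ⟨n, hn, fun k => Fin.lastCases (1 : F) (fun p => U.det * (z p)⁻¹) k, ?_, ?_⟩
    · intro k
      induction k using Fin.lastCases with
      | last =>
        simp only [Fin.lastCases_last]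
        exact one_ne_zero
      | cast p =>
        simp only [Fin.lastCases_castSucc]
        exact mul_ne_zero hUdetne (inv_ne_zero (hzne p))
    · intro k
      have hkey : ∀ x : Fin 4 → F, M.mulVec x = D.mulVec (Matrix.cramer U x) := by
        intro x
        rw [hMdef, ← Matrix.mulVec_mulVec, ← Matrix.cramer_eq_adjugate_mulVec]
      induction k using Fin.lastCases with
      | last =>
        simp only [Fin.lastCases_last]
        funext j
        simp only [Pi.smul_apply, smul_eq_mul, one_mul]
        rw [hkey, ← hzdef, Matrix.mulVec_diagonal, inv_mul_cancel₀ (hzne j)]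
        fin_cases j <;> rfl
      | cast p =>
        simp only [Fin.lastCases_castSucc]
        have hcram : Matrix.cramer U (O (σ p)) = U.det • (Pi.single p 1 : Fin 4 → F) := by
          funext j
          rw [Matrix.cramer_apply]
          by_cases hjp : j = p
          · subst hjp
            have : (fun r => O (σ j) r) = fun r => U r j := rfl
            rw [show O (σ j) = fun r => U r j from rfl, Matrix.updateCol_eq_self]
            simp
          · have hdet0 : (U.updateCol j (O (σ p))).det = 0 := by
              rw [← Matrix.det_transpose, ← Matrix.updateRow_transpose]
              refine Matrix.det_zero_of_row_eq hjp ?_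
              funext r
              simp only [Matrix.updateRow_apply, if_pos rfl, if_neg (Ne.symm hjp),
                Matrix.transpose_apply]
              rfl
            rw [hdet0]
            simp [Pi.single_apply, hjp]
        show M.mulVec (O (σ p)) = _
        rw [hkey, hcram, Matrix.mulVec_smul]
        have hDp : D.mulVec (Pi.single p 1) = (z p)⁻¹ • (Pi.single p 1 : Fin 4 → F) := by
          funext j
          rw [Matrix.mulVec_diagonal]
          by_cases hjp : j = p
          · subst hjp; simp
          · simp [Pi.single_apply, hjp]
        rw [hDp, smul_smul]
        congr 1
        funext j
        fin_cases p <;> fin_cases j <;> simp [stdFive, Pi.single_apply] <;> rfl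




def vptN (T : Finset (Fin 8)) : PIdx → ℕ := fun Q => (Q.1 ∩ T).card - 1

def vplnN (T : Finset (Fin 8)) : PIdx → ℕ := fun Q => (Q.1 ∩ T).card - 3

lemma vshape (m c : ℕ) : max ((c : ℚ) - m) 0 = ((c - m : ℕ) : ℚ) := by
  rcases le_or_gt m c with h | h
  · rw [Nat.cast_sub h]
    refine max_eq_left ?_
    have hc : (m : ℚ) ≤ (c : ℚ) := by exact_mod_cast h
    linarith
  · rw [Nat.sub_eq_zero_of_le h.le, Nat.cast_zero]
    refine max_eq_right ?_
    have hc : (c : ℚ) ≤ (m : ℚ) := by exact_mod_cast h.le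
    linarith

lemma vpt_cast (T : Finset (Fin 8)) (Q : PIdx) : vpt T Q = ((vptN T Q : ℕ) : ℚ) := by
  have := vshape 1 ((Q.1 ∩ T).card)
  rw [Nat.cast_one] at this
  exact this

lemma vpln_cast (T : Finset (Fin 8)) (Q : PIdx) : vpln T Q = ((vplnN T Q : ℕ) : ℚ) := by
  have := vshape 3 ((Q.1 ∩ T).card)
  rw [Nat.cast_ofNat] at this
  exact this

theorem masterMoveNat (v : AddValuation F (WithTop ℚ))
    (hsurj : ∀ q : ℚ, ∃ x : F, v x = (q : WithTop ℚ))
    (w w' : PIdx → ℚ) (wN w'N : PIdx → ℕ)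
    (hw : ∀ Q, w Q = ((wN Q : ℕ) : ℚ)) (hw' : ∀ Q, w' Q = ((w'N Q : ℕ) : ℚ))
    (σ : Fin 4 → Fin 8) (aN : Fin 4 → ℕ) (μN : Fin 8 → ℕ)
    (hσ : Function.Injective σ)
    (hbase : ∀ Q : PIdx, Q.1 = Finset.image σ Finset.univ → wN Q = 0)
    (hmin : ∀ Q : PIdx, ∀ i j, Q.1 = Finset.image (Function.update σ j i) Finset.univ →
        μN i ≤ aN j + wN Q)
    (hmin' : ∀ i : Fin 8, ∃ j, Function.Injective (Function.update σ j i) ∧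
        ∀ Q : PIdx, Q.1 = Finset.image (Function.update σ j i) Finset.univ →
          μN i = aN j + wN Q)
    (hshift : ∀ Q : PIdx, w'N Q + ∑ i ∈ Q.1, μN i = wN Q + ∑ j, aN j) :
    ∀ O : Octad F, Normalized v O → HasPluck v O w →
      ∃ O' : Octad F, Normalized v O' ∧ PGLMove O O' ∧ HasPluck v O' w' := by
  refine masterMove v hsurj w w' σ (fun j => (aN j : ℚ)) (fun i => (μN i : ℚ)) hσ ?_ ?_ ?_ ?_
  · intro Q hQ
    rw [hw, hbase Q hQ, Nat.cast_zero]
  · intro Q i j hQ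
    show ((μN i : ℕ) : ℚ) ≤ ((aN j : ℕ) : ℚ) + w Q
    rw [hw]
    exact_mod_cast hmin Q i j hQ
  · intro i
    obtain ⟨j, hj1, hj2⟩ := hmin' i
    refine ⟨j, hj1, fun Q hQ => ?_⟩
    show ((μN i : ℕ) : ℚ) = ((aN j : ℕ) : ℚ) + w Q
    rw [hw]
    exact_mod_cast hj2 Q hQ
  · intro Q
    rw [hw', hw]
    have h := hshift Q
    have h2 : ((w'N Q : ℕ) : ℚ) + ∑ i ∈ Q.1, ((μN i : ℕ) : ℚ)
        = ((wN Q : ℕ) : ℚ) + ∑ j, ((aN j : ℕ) : ℚ) := by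
      push_cast
      exact_mod_cast h
    linarith

theorem masterStdNat (v : AddValuation F (WithTop ℚ)) (w : PIdx → ℚ) (wN : PIdx → ℕ)
    (hw : ∀ Q, w Q = ((wN Q : ℕ) : ℚ)) (n : Fin 5 → Fin 8) (hn : Function.Injective n)
    (hz : ∀ Q : PIdx, Q.1 ⊆ Finset.image n Finset.univ → wN Q = 0) :
    GLOStd v w := by
  refine masterStd v w n hn ?_
  intro Q hQ
  rw [hw, hz Q hQ, Nat.cast_zero]

lemma PGLMove_trans {O O' O'' : Octad F} (h1 : PGLMove O O') (h2 : PGLMove O' O'') :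
    PGLMove O O'' := by
  obtain ⟨M, hM, c, hc, h⟩ := h1
  obtain ⟨M', hM', c', hc', h'⟩ := h2
  refine ⟨M' * M, by rw [Matrix.det_mul]; exact hM'.mul hM, fun i => c' i * c i,
    fun i => mul_ne_zero (hc' i) (hc i), fun i => ?_⟩
  rw [h', h, Matrix.mulVec_smul, Matrix.mulVec_mulVec, mul_smul]

lemma PGLequiv_symm {v : AddValuation F (WithTop ℚ)} {w w' : PIdx → ℚ}
    (h : PGLequiv v w w') : PGLequiv v w' w := ⟨h.2, h.1⟩

lemma PGLequiv_trans {v : AddValuation F (WithTop ℚ)} {w1 w2 w3 : PIdx → ℚ}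
    (h1 : PGLequiv v w1 w2) (h2 : PGLequiv v w2 w3) : PGLequiv v w1 w3 := by
  constructor
  · intro O hN hP
    obtain ⟨O', hN', hm', hp'⟩ := h1.1 O hN hP
    obtain ⟨O'', hN'', hm'', hp''⟩ := h2.1 O' hN' hp'
    exact ⟨O'', hN'', PGLMove_trans hm' hm'', hp''⟩
  · intro O hN hP
    obtain ⟨O', hN', hm', hp'⟩ := h2.2 O hN hP
    obtain ⟨O'', hN'', hm'', hp''⟩ := h1.2 O' hN' hp'
    exact ⟨O'', hN'', PGLMove_trans hm' hm'', hp''⟩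

end OctadAux

set_option maxRecDepth 100000 in
/-- The `α`-block valuation data: (i) `v_pt^{AB}` and `v_pln^{CDEFGH}` are
PGL-equivalent; (ii) `v_pln^{ABCD} + v_pln^{EFGH}`, `v_pln^{ABCD} + v_pt^{ABCD}` and
`v_pln^{EFGH} + v_pt^{EFGH}` are pairwise PGL-equivalent.  Moreover, every octad with one of
these Plücker valuation vectors is carried by an element of `GL₄(O)` to an octad five of whose
points are the standard points.  (Labels: `A,…,H = 0,…,7`.) -/
theorem alpha_blocks_PGL_equivalent
    (F : Type) [Field F] [IsAlgClosed F] (v : AddValuation F (WithTop ℚ))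
    (hsurj : ∀ q : ℚ, ∃ x : F, v x = (q : WithTop ℚ))
    (hres : v 2 = 0) :
    PGLequiv v (vpt {0, 1}) (vpln {2, 3, 4, 5, 6, 7}) ∧
    PGLequiv v (vpln {0, 1, 2, 3} + vpln {4, 5, 6, 7}) (vpln {0, 1, 2, 3} + vpt {0, 1, 2, 3}) ∧
    PGLequiv v (vpln {0, 1, 2, 3} + vpt {0, 1, 2, 3}) (vpln {4, 5, 6, 7} + vpt {4, 5, 6, 7}) ∧
    PGLequiv v (vpln {0, 1, 2, 3} + vpln {4, 5, 6, 7}) (vpln {4, 5, 6, 7} + vpt {4, 5, 6, 7}) ∧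
    GLOStd v (vpt {0, 1}) ∧
    GLOStd v (vpln {2, 3, 4, 5, 6, 7}) ∧
    GLOStd v (vpln {0, 1, 2, 3} + vpln {4, 5, 6, 7}) ∧
    GLOStd v (vpln {0, 1, 2, 3} + vpt {0, 1, 2, 3}) ∧
    GLOStd v (vpln {4, 5, 6, 7} + vpt {4, 5, 6, 7}) := by
  classical
  open OctadAux in
  set wN1 : PIdx → ℕ := vptN {0, 1} with hwN1
  set wN1' : PIdx → ℕ := vplnN {2, 3, 4, 5, 6, 7} with hwN1'
  set wN2 : PIdx → ℕ := fun Q => vplnN {0, 1, 2, 3} Q + vplnN {4, 5, 6, 7} Q with hwN2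
  set wN3 : PIdx → ℕ := fun Q => vplnN {0, 1, 2, 3} Q + vptN {0, 1, 2, 3} Q with hwN3
  set wN4 : PIdx → ℕ := fun Q => vplnN {4, 5, 6, 7} Q + vptN {4, 5, 6, 7} Q with hwN4
  have hw1 : ∀ Q, vpt {0, 1} Q = ((wN1 Q : ℕ) : ℚ) := fun Q => vpt_cast _ _
  have hw1' : ∀ Q, vpln {2, 3, 4, 5, 6, 7} Q = ((wN1' Q : ℕ) : ℚ) := fun Q => vpln_cast _ _
  have hw2 : ∀ Q, (vpln {0, 1, 2, 3} + vpln {4, 5, 6, 7}) Q = ((wN2 Q : ℕ) : ℚ) := by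
    intro Q
    rw [Pi.add_apply, vpln_cast, vpln_cast, hwN2]
    push_cast
    ring
  have hw3 : ∀ Q, (vpln {0, 1, 2, 3} + vpt {0, 1, 2, 3}) Q = ((wN3 Q : ℕ) : ℚ) := by
    intro Q
    rw [Pi.add_apply, vpln_cast, vpt_cast, hwN3]
    push_cast
    ring
  have hw4 : ∀ Q, (vpln {4, 5, 6, 7} + vpt {4, 5, 6, 7}) Q = ((wN4 Q : ℕ) : ℚ) := by
    intro Q
    rw [Pi.add_apply, vpln_cast, vpt_cast, hwN4]
    push_cast
    ring
  have e1 : PGLequiv v (vpt {0, 1}) (vpln {2, 3, 4, 5, 6, 7}) := by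
    constructor
    · exact masterMoveNat v hsurj _ _ wN1 wN1' hw1 hw1' ![0, 2, 3, 4] ![1, 0, 0, 0]
        ![1, 1, 0, 0, 0, 0, 0, 0] (by decide) (by decide) (by decide) (by decide) (by decide)
    · exact masterMoveNat v hsurj _ _ wN1' wN1 hw1' hw1 ![0, 2, 3, 4] ![0, 1, 1, 1]
        ![0, 0, 1, 1, 1, 1, 1, 1] (by decide) (by decide) (by decide) (by decide) (by decide)
  have e23 : PGLequiv v (vpln {0, 1, 2, 3} + vpln {4, 5, 6, 7})
      (vpln {0, 1, 2, 3} + vpt {0, 1, 2, 3}) := by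
    constructor
    · exact masterMoveNat v hsurj _ _ wN2 wN3 hw2 hw3 ![0, 4, 5, 6] ![0, 1, 1, 1]
        ![0, 0, 0, 0, 1, 1, 1, 1] (by decide) (by decide) (by decide) (by decide) (by decide)
    · exact masterMoveNat v hsurj _ _ wN3 wN2 hw3 hw2 ![0, 4, 5, 6] ![1, 0, 0, 0]
        ![1, 1, 1, 1, 0, 0, 0, 0] (by decide) (by decide) (by decide) (by decide) (by decide)
  have e24 : PGLequiv v (vpln {0, 1, 2, 3} + vpln {4, 5, 6, 7})
      (vpln {4, 5, 6, 7} + vpt {4, 5, 6, 7}) := by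
    constructor
    · exact masterMoveNat v hsurj _ _ wN2 wN4 hw2 hw4 ![0, 1, 2, 4] ![1, 1, 1, 0]
        ![1, 1, 1, 1, 0, 0, 0, 0] (by decide) (by decide) (by decide) (by decide) (by decide)
    · exact masterMoveNat v hsurj _ _ wN4 wN2 hw4 hw2 ![0, 1, 2, 4] ![0, 0, 0, 1]
        ![0, 0, 0, 0, 1, 1, 1, 1] (by decide) (by decide) (by decide) (by decide) (by decide)
  have e34 : PGLequiv v (vpln {0, 1, 2, 3} + vpt {0, 1, 2, 3})
      (vpln {4, 5, 6, 7} + vpt {4, 5, 6, 7}) := PGLequiv_trans (PGLequiv_symm e23) e24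
  refine ⟨e1, e23, e34, e24, ?_, ?_, ?_, ?_, ?_⟩
  · exact masterStdNat v _ wN1 hw1 ![2, 3, 4, 5, 6] (by decide) (by decide)
  · exact masterStdNat v _ wN1' hw1' ![0, 1, 2, 3, 4] (by decide) (by decide)
  · exact masterStdNat v _ wN2 hw2 ![0, 1, 2, 4, 5] (by decide) (by decide)
  · exact masterStdNat v _ wN3 hw3 ![0, 4, 5, 6, 7] (by decide) (by decide)
  · exact masterStdNat v _ wN4 hw4 ![0, 1, 2, 3, 4] (by decide) (by decide)

end
end
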